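/- Fix F > 0. For finite subsets X, X' of vertices of a rooted tree with edge lengths, define for each edge e: c(X, e | X') = ⌈mst_e(X)/F⌉ if V_e ∩ X' = ∅, and ⌊(mst_e(X'∪X) − mst_e(X'))/F⌋ otherwise. Then for all sets X₁, X₂, X₃ and every edge e: c(X₁ ∪ X₂, e | X₃) ≤ ⌈mst_e(X₁)/F⌉ + c(X₂, e | X₃). -/

import Mathlib

open scoped Classical

/-- `mste o parent ℓ v X` is the cost `mst_e(X)` of the minimal subtree of the
rooted tree (given by parent pointers, root `o`, edge `(parent u, u)` of length
`ℓ u` for `u ≠ o`) containing `o` and the points of `X` below the edge with child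
endpoint `v`: an edge with child `u` is counted iff some `w ∈ X` is a descendant
of both `v` and `u`. -/
noncomputable def mste {V : Type*} [Fintype V] (o : V) (parent : V → V)
    (ℓ : V → ℝ) (v : V) (X : Set V) : ℝ :=
  ∑ u ∈ Finset.univ.filter (fun u => u ≠ o ∧
      ∃ w ∈ X, (∃ n, parent^[n] w = v) ∧ ∃ m, parent^[m] w = u), ℓ u

lemma mste_union_le {V : Type*} [Fintype V] (o : V) (parent : V → V) (ℓ : V → ℝ)
    (hℓ : ∀ v, 0 ≤ ℓ v) (v : V) (A B : Set V) :
    mste o parent ℓ v (A ∪ B) ≤ mste o parent ℓ v A + mste o parent ℓ v B := by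
  classical
  set sA := Finset.univ.filter (fun u => u ≠ o ∧
        ∃ w ∈ A, (∃ n, parent^[n] w = v) ∧ ∃ m, parent^[m] w = u) with hsA
  set sB := Finset.univ.filter (fun u => u ≠ o ∧
        ∃ w ∈ B, (∃ n, parent^[n] w = v) ∧ ∃ m, parent^[m] w = u) with hsB
  have key : mste o parent ℓ v (A ∪ B) = ∑ u ∈ sA ∪ sB, ℓ u := by
    unfold mste
    congr 1
    ext u
    simp only [hsA, hsB, Finset.mem_filter, Finset.mem_union, Set.mem_union,
      Finset.mem_univ, true_and]
    constructor
    · rintro ⟨ho, w, (hw | hw), hrest⟩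
      · exact Or.inl ⟨ho, w, hw, hrest⟩
      · exact Or.inr ⟨ho, w, hw, hrest⟩
    · rintro (⟨ho, w, hw, hrest⟩ | ⟨ho, w, hw, hrest⟩)
      · exact ⟨ho, w, Or.inl hw, hrest⟩
      · exact ⟨ho, w, Or.inr hw, hrest⟩
  have hA : mste o parent ℓ v A = ∑ u ∈ sA, ℓ u := rfl
  have hB : mste o parent ℓ v B = ∑ u ∈ sB, ℓ u := rfl
  rw [key, hA, hB]
  have h : (∑ u ∈ sA ∪ sB, ℓ u) + ∑ u ∈ sA ∩ sB, ℓ u = (∑ u ∈ sA, ℓ u) + ∑ u ∈ sB, ℓ u := Finset.sum_union_inter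
  have hnn : 0 ≤ ∑ u ∈ sA ∩ sB, ℓ u := Finset.sum_nonneg fun u _ => hℓ u
  linarith

lemma floor_add_le_ceil_add_floor (a b : ℝ) : ⌊a + b⌋ ≤ ⌈a⌉ + ⌊b⌋ := by
  have h1 : a + b ≤ (⌈a⌉ : ℝ) + b := by linarith [Int.le_ceil a]
  calc ⌊a + b⌋ ≤ ⌊(⌈a⌉ : ℝ) + b⌋ := Int.floor_le_floor h1
    _ = ⌈a⌉ + ⌊b⌋ := Int.floor_intCast_add _ _

theorem stmt_17 {V : Type*} [Fintype V] (o : V) (parent : V → V) (ℓ : V → ℝ)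
    (hroot : parent o = o) (htree : ∀ v, ∃ n, parent^[n] v = o)
    (hℓ : ∀ v, 0 ≤ ℓ v) (F : ℝ) (hF : 0 < F)
    (X₁ X₂ X₃ : Set V) (v : V) (hv : v ≠ o) :
    (if ∃ w ∈ X₃, ∃ n, parent^[n] w = v
      then ⌊(mste o parent ℓ v (X₃ ∪ (X₁ ∪ X₂)) - mste o parent ℓ v X₃) / F⌋
      else ⌈mste o parent ℓ v (X₁ ∪ X₂) / F⌉)
    ≤ ⌈mste o parent ℓ v X₁ / F⌉ +
      (if ∃ w ∈ X₃, ∃ n, parent^[n] w = v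
        then ⌊(mste o parent ℓ v (X₃ ∪ X₂) - mste o parent ℓ v X₃) / F⌋
        else ⌈mste o parent ℓ v X₂ / F⌉) := by
  split_ifs with h
  · have hsub : mste o parent ℓ v (X₃ ∪ (X₁ ∪ X₂)) ≤
        mste o parent ℓ v X₁ + mste o parent ℓ v (X₃ ∪ X₂) := by
      have h1 : X₃ ∪ (X₁ ∪ X₂) = X₁ ∪ (X₃ ∪ X₂) := by
        rw [← Set.union_assoc, Set.union_comm X₃ X₁, Set.union_assoc]
      rw [h1]
      exact mste_union_le o parent ℓ hℓ v _ _
    have key : (mste o parent ℓ v (X₃ ∪ (X₁ ∪ X₂)) - mste o parent ℓ v X₃) / F ≤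
        mste o parent ℓ v X₁ / F +
        (mste o parent ℓ v (X₃ ∪ X₂) - mste o parent ℓ v X₃) / F := by
      rw [← add_div]
      gcongr
      linarith
    calc ⌊(mste o parent ℓ v (X₃ ∪ (X₁ ∪ X₂)) - mste o parent ℓ v X₃) / F⌋
        ≤ ⌊mste o parent ℓ v X₁ / F +
          (mste o parent ℓ v (X₃ ∪ X₂) - mste o parent ℓ v X₃) / F⌋ :=
          Int.floor_le_floor key
      _ ≤ _ := floor_add_le_ceil_add_floor _ _
  · have hsub : mste o parent ℓ v (X₁ ∪ X₂) ≤
        mste o parent ℓ v X₁ + mste o parent ℓ v X₂ :=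
      mste_union_le o parent ℓ hℓ v _ _
    have key : mste o parent ℓ v (X₁ ∪ X₂) / F ≤
        mste o parent ℓ v X₁ / F + mste o parent ℓ v X₂ / F := by
      rw [← add_div]
      gcongr
    calc ⌈mste o parent ℓ v (X₁ ∪ X₂) / F⌉
        ≤ ⌈mste o parent ℓ v X₁ / F + mste o parent ℓ v X₂ / F⌉ :=
          Int.ceil_le_ceil key
      _ ≤ _ := Int.ceil_add_le _ _
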